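/- Let v be a voltage profile with v_k = V0 > 0 at all sources and v_k > 0 at all loads, and define the line currents i_α = (v_{α₁} − v_{α₂})/R_α for each α ∈ E. Suppose Kirchhoff balance holds at every load bus k ∈ L: the net current flowing into bus k along its incident lines equals p_k/v_k. Then the resistive co-content satisfies the identity G(v) = Σ_{k∈L} [ (p_k/v_k)·(V0 − v_k)/2 + p_k·log v_k ]. -/

import Mathlib

open Finset

/-- Full voltage profile on buses `S ⊕ L`: every source bus is held at `V0`,
load bus `k` is at `vL k`. -/
def fullV {S L : Type*} (V0 : ℝ) (vL : L → ℝ) : S ⊕ L → ℝ :=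
  Sum.elim (fun _ => V0) vL

/-- Resistive co-content
`G(v) = Σ_α (v_{α₁} - v_{α₂})²/(2 R_α) + Σ_k p_k log v_k`. -/
noncomputable def cocontent {S L E : Type*} [Fintype L] [Fintype E]
    (e1 e2 : E → S ⊕ L) (R : E → ℝ) (p : L → ℝ) (V0 : ℝ) (vL : L → ℝ) : ℝ :=
  (∑ α, (fullV (S := S) V0 vL (e1 α) - fullV (S := S) V0 vL (e2 α)) ^ 2 / (2 * R α))
    + ∑ k, p k * Real.log (vL k)

/-- There is a path of lines (each traversed in either direction) joining the
load bus `k` to some source bus, whose total resistance is at most `Rmax`. -/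
def pathToSource {S L E : Type*} [Fintype E]
    (e1 e2 : E → S ⊕ L) (R : E → ℝ) (Rmax : ℝ) (k : L) : Prop :=
  ∃ (n : ℕ) (b : Fin (n + 1) → S ⊕ L) (ed : Fin n → E),
    b 0 = Sum.inr k ∧ (∃ s : S, b (Fin.last n) = Sum.inl s) ∧
    (∀ i : Fin n,
      (e1 (ed i) = b i.castSucc ∧ e2 (ed i) = b i.succ) ∨
      (e1 (ed i) = b i.succ ∧ e2 (ed i) = b i.castSucc)) ∧
    (∑ i, R (ed i)) ≤ Rmax

/-- `vL` is a critical point of the co-content `G` with respect to the load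
voltages: all load voltages are positive and `∂G/∂v_k = 0` for every load `k`. -/
noncomputable def isCritPt {S L E : Type*} [Fintype E] [Fintype L]
    [DecidableEq S] [DecidableEq L]
    (e1 e2 : E → S ⊕ L) (R : E → ℝ) (p : L → ℝ) (V0 : ℝ) (vL : L → ℝ) : Prop :=
  (∀ k, 0 < vL k) ∧
  ∀ k : L,
    (∑ α, ((if e1 α = Sum.inr k then (1 : ℝ) else 0)
        - (if e2 α = Sum.inr k then 1 else 0))
      * (fullV (S := S) V0 vL (e1 α) - fullV (S := S) V0 vL (e2 α)) / R α)
    + p k / vL k = 0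

/-- High-voltage solution of `v (V0 - v) = R p`. -/
noncomputable def Vhigh (V0 R p : ℝ) : ℝ :=
  V0 / 2 * (1 + Real.sqrt (1 - p / (V0 ^ 2 / (4 * R))))

/-- Low-voltage solution of `v (V0 - v) = R p`. -/
noncomputable def Vlow (V0 R p : ℝ) : ℝ :=
  V0 / 2 * (1 - Real.sqrt (1 - p / (V0 ^ 2 / (4 * R))))

/-- Line-current derivative expressed through the state:
`di_α/dt = (-R_α i_α + v_{α₁} - v_{α₂}) / L_α`. -/
noncomputable def idotF {S L E : Type*} (e1 e2 : E → S ⊕ L) (R Lind : E → ℝ)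
    (V0 : ℝ) (i : E → ℝ) (vL : L → ℝ) (α : E) : ℝ :=
  (-R α * i α + fullV (S := S) V0 vL (e1 α) - fullV (S := S) V0 vL (e2 α)) / Lind α

/-- Load-voltage derivative expressed through the state:
`dv_k/dt = (-p_k/v_k - (net current leaving bus k)) / C_k`. -/
noncomputable def vdotF {S L E : Type*} [Fintype E] [DecidableEq S] [DecidableEq L]
    (e1 e2 : E → S ⊕ L) (C p : L → ℝ) (i : E → ℝ) (vL : L → ℝ) (k : L) : ℝ :=
  (-(p k / vL k)
    - ∑ α, ((if e1 α = Sum.inr k then (1 : ℝ) else 0)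
        - (if e2 α = Sum.inr k then 1 else 0)) * i α) / C k

/-- Brayton–Moser potential
`P(x) = G(v) + Σ_α ((τmax - τ_α)/2) L_α (di_α/dt)² + (τmax/2) Σ_k C_k (dv_k/dt)²`,
with the time derivatives expressed through the state via the dynamics. -/
noncomputable def BMpot {S L E : Type*} [Fintype L] [Fintype E]
    [DecidableEq S] [DecidableEq L]
    (e1 e2 : E → S ⊕ L) (R Lind : E → ℝ) (C p : L → ℝ) (V0 τmax : ℝ)
    (i : E → ℝ) (vL : L → ℝ) : ℝ :=
  cocontent e1 e2 R p V0 vL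
    + (∑ α, (τmax - Lind α / R α) / 2 * Lind α * (idotF e1 e2 R Lind V0 i vL α) ^ 2)
    + τmax / 2 * ∑ k, C k * (vdotF e1 e2 C p i vL k) ^ 2

/-- At an equilibrium (line currents `i_α = (v_{α₁} - v_{α₂})/R_α` and
Kirchhoff balance `net current into load k = p_k / v_k` at every load),
the co-content satisfies
`G(v) = Σ_k [ (p_k/v_k)(V0 - v_k)/2 + p_k log v_k ]`. -/
theorem stmt_10 {S L E : Type*} [Fintype S] [Fintype L] [Fintype E]
    [DecidableEq S] [DecidableEq L]
    (e1 e2 : E → S ⊕ L) (R : E → ℝ) (hR : ∀ α, 0 < R α)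
    (V0 : ℝ) (hV0 : 0 < V0)
    (p : L → ℝ) (hp : ∀ k, 0 ≤ p k)
    (vL : L → ℝ) (hv : ∀ k, 0 < vL k)
    (hkirchhoff : ∀ k : L,
      (∑ α, ((if e2 α = Sum.inr k then (1 : ℝ) else 0)
          - (if e1 α = Sum.inr k then 1 else 0))
        * ((fullV (S := S) V0 vL (e1 α) - fullV (S := S) V0 vL (e2 α)) / R α))
      = p k / vL k) :
    cocontent e1 e2 R p V0 vL =
      ∑ k, (p k / vL k * (V0 - vL k) / 2 + p k * Real.log (vL k)) := by
  classical
  set F : S ⊕ L → ℝ := fullV (S := S) V0 vL with hF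
  set f : E → ℝ := fun α => (F (e1 α) - F (e2 α)) / R α with hf
  set J : (S ⊕ L) → ℝ := fun b =>
    ∑ α, ((if e1 α = b then (1 : ℝ) else 0) - (if e2 α = b then 1 else 0)) * f α
    with hJ
  have hJload : ∀ k : L, J (Sum.inr k) = -(p k / vL k) := by
    intro k
    have h := hkirchhoff k
    have : J (Sum.inr k) = -(∑ α, ((if e2 α = (Sum.inr k : S ⊕ L) then (1:ℝ) else 0)
        - (if e1 α = Sum.inr k then 1 else 0))
        * ((F (e1 α) - F (e2 α)) / R α)) := by
      rw [hJ, ← Finset.sum_neg_distrib]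
      exact Finset.sum_congr rfl fun α _ => by ring
    rw [this, h]
  have hJtot : ∑ b, J b = 0 := by
    rw [hJ, Finset.sum_comm]
    apply Finset.sum_eq_zero
    intro α _
    rw [← Finset.sum_mul]
    have : (∑ b : S ⊕ L, ((if e1 α = b then (1:ℝ) else 0) - (if e2 α = b then 1 else 0))) = 0 := by
      rw [Finset.sum_sub_distrib]
      simp
    rw [this, zero_mul]
  have hkey : ∀ α, F (e1 α) - F (e2 α)
      = ∑ b, F b * ((if e1 α = b then (1:ℝ) else 0) - (if e2 α = b then 1 else 0)) := by
    intro α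
    simp [mul_sub, Finset.sum_sub_distrib, mul_ite, Finset.sum_ite_eq]
  have hmain : (∑ α, (F (e1 α) - F (e2 α)) ^ 2 / (2 * R α)) = (1/2) * ∑ b, F b * J b := by
    have h1 : (∑ α, (F (e1 α) - F (e2 α)) ^ 2 / (2 * R α))
        = (1/2) * ∑ α, (F (e1 α) - F (e2 α)) * f α := by
      rw [Finset.mul_sum]
      refine Finset.sum_congr rfl fun α _ => ?_
      have hRα := (hR α).ne'
      simp only [hf]
      field_simp
    rw [h1]
    congr 1
    calc ∑ α, (F (e1 α) - F (e2 α)) * f α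
        = ∑ α, (∑ b, F b * ((if e1 α = b then (1:ℝ) else 0) - (if e2 α = b then 1 else 0))) * f α := by
          exact Finset.sum_congr rfl fun α _ => by rw [← hkey α]
      _ = ∑ α, ∑ b, F b * (((if e1 α = b then (1:ℝ) else 0) - (if e2 α = b then 1 else 0)) * f α) := by
          refine Finset.sum_congr rfl fun α _ => ?_
          rw [Finset.sum_mul]
          exact Finset.sum_congr rfl fun b _ => by ring
      _ = ∑ b, F b * J b := by
          rw [Finset.sum_comm]
          exact Finset.sum_congr rfl fun b _ => by rw [Finset.mul_sum]
  have hsplit : ∑ b, F b * J b = ∑ s : S, V0 * J (Sum.inl s) + ∑ k : L, vL k * J (Sum.inr k) := by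
    rw [Fintype.sum_sum_type]
    simp [hF, fullV]
  have hsrc : ∑ s : S, J (Sum.inl s) = ∑ k : L, p k / vL k := by
    have := hJtot
    rw [Fintype.sum_sum_type] at this
    have h2 : ∑ k : L, J (Sum.inr k) = -∑ k : L, p k / vL k := by
      rw [← Finset.sum_neg_distrib]
      exact Finset.sum_congr rfl fun k _ => by rw [hJload k]
    linarith [this, h2]
  have hJr : ∑ k : L, vL k * J (Sum.inr k) = -∑ k : L, p k := by
    rw [← Finset.sum_neg_distrib]
    refine Finset.sum_congr rfl fun k _ => ?_
    rw [hJload k]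
    field_simp [(hv k).ne']
  rw [cocontent]
  rw [show (∑ α, (fullV (S := S) V0 vL (e1 α) - fullV (S := S) V0 vL (e2 α)) ^ 2 / (2 * R α))
      = ∑ α, (F (e1 α) - F (e2 α)) ^ 2 / (2 * R α) from rfl]
  rw [hmain, hsplit, hJr, ← Finset.mul_sum, hsrc]
  rw [Finset.sum_add_distrib]
  rw [Finset.mul_sum, ← Finset.sum_div]
  have : ∑ k : L, p k / vL k * (V0 - vL k)
      = ∑ k : L, V0 * (p k / vL k) - ∑ k : L, p k := by
    rw [← Finset.sum_sub_distrib]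
    refine Finset.sum_congr rfl fun k _ => ?_
    have := (hv k).ne'
    field_simp
  rw [this]
  ring
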